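/- Let (X, ≤) be a lower 1-transitive linear order and let s₁ and s₂ be two nontrivial invariant partitions of X. Then s₁ refines s₂ or s₂ refines s₁ (i.e. (∀ x y, x ∼₁ y → x ∼₂ y) or (∀ x y, x ∼₂ y → x ∼₁ y)); moreover, if s₁ ≠ s₂, then s₁ and s₂ have no equivalence class in common, i.e. there is no a ∈ X with {x : x ∼₁ a} = {x : x ∼₂ a}. -/

import Mathlib

/-- A linear order is lower 1-transitive if any two of its initial segments
are order-isomorphic. -/
def LowerOneTransitive (X : Type*) [LinearOrder X] : Prop :=
  ∀ a b : X, Nonempty (Set.Iic a ≃o Set.Iic b)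

/-- An invariant partition: an equivalence relation with convex classes which is
preserved by every order isomorphism between initial segments. -/
def IsInvariantPartition {X : Type*} [LinearOrder X] (s : Setoid X) : Prop :=
  (∀ x y z : X, s.r x y → x ≤ z → z ≤ y → s.r z x) ∧
  (∀ (a b : X) (f : Set.Iic a ≃o Set.Iic b) (x y : Set.Iic a),
    s.r (x : X) (y : X) ↔ s.r ((f x : X)) ((f y : X)))

/-- An invariant partition is nontrivial if not all classes are singletons and
there is more than one class. -/
def IsNontrivialPartition {X : Type*} (s : Setoid X) : Prop :=
  (∃ x y : X, x ≠ y ∧ s.r x y) ∧ (∃ x y : X, ¬ s.r x y)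

/-- An order isomorphism between initial segments sends the top point to the top point. -/
lemma iicIso_top {X : Type*} [LinearOrder X] {a b : X} (f : Set.Iic a ≃o Set.Iic b) :
    (f ⟨a, le_rfl⟩ : X) = b := by
  refine le_antisymm (f ⟨a, le_rfl⟩).2 ?_
  have h3 : f.symm ⟨b, le_rfl⟩ ≤ ⟨a, le_rfl⟩ := (f.symm ⟨b, le_rfl⟩).2
  have := f.monotone h3
  exact (by simpa using this : (⟨b, le_rfl⟩ : Set.Iic b) ≤ f ⟨a, le_rfl⟩)

/-- Transfer the relation to the top point along an order isomorphism of
initial segments. -/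
lemma transfer_rel {X : Type*} [LinearOrder X] {s : Setoid X}
    (hs : IsInvariantPartition s) {a b : X} (f : Set.Iic a ≃o Set.Iic b)
    {x : X} (hx : x ≤ a) :
    s.r x a ↔ s.r (f ⟨x, hx⟩ : X) b := by
  have h := hs.2 a b f ⟨x, hx⟩ ⟨a, le_rfl⟩
  rwa [iicIso_top f] at h

/-- At a fixed point, the classes of two invariant partitions (restricted below
the point) are comparable by inclusion. -/
lemma pointwise_comparable {X : Type*} [LinearOrder X] {s₁ s₂ : Setoid X}
    (h₁ : IsInvariantPartition s₁) (h₂ : IsInvariantPartition s₂) (a : X) :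
    (∀ x : X, x ≤ a → s₁.r x a → s₂.r x a) ∨ (∀ x : X, x ≤ a → s₂.r x a → s₁.r x a) := by
  by_contra h
  push_neg at h
  obtain ⟨⟨x, hxa, hx1, hx2⟩, ⟨y, hya, hy2, hy1⟩⟩ := h
  rcases le_total x y with hxy | hyx
  · exact hy1 (s₁.iseqv.trans (h₁.1 x a y hx1 hxy hya) hx1)
  · exact hx2 (s₂.iseqv.trans (h₂.1 y a x hy2 hyx hxa) hy2)

/-- Of two nontrivial invariant partitions of a lower 1-transitive linear order, one
refines the other; moreover distinct invariant partitions share no class. -/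
theorem invariantPartition_comparable {X : Type*} [LinearOrder X]
    (hX : LowerOneTransitive X) (s₁ s₂ : Setoid X)
    (h₁ : IsInvariantPartition s₁) (h₂ : IsInvariantPartition s₂)
    (hn₁ : IsNontrivialPartition s₁) (hn₂ : IsNontrivialPartition s₂) :
    ((∀ x y : X, s₁.r x y → s₂.r x y) ∨ (∀ x y : X, s₂.r x y → s₁.r x y)) ∧
    (s₁ ≠ s₂ → ¬ ∃ a : X, {x : X | s₁.r x a} = {x : X | s₂.r x a}) := by
  constructor
  · -- comparability: the direction of pointwise inclusion is uniform
    by_cases hP : ∀ a : X, ∀ x : X, x ≤ a → s₁.r x a → s₂.r x a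
    · left
      intro x y hxy
      rcases le_total x y with h | h
      · exact hP y x h hxy
      · exact s₂.iseqv.symm (hP x y h (s₁.iseqv.symm hxy))
    · right
      push_neg at hP
      obtain ⟨a, x, hxa, hx1, hx2⟩ := hP
      have key : ∀ b : X, ∀ y : X, y ≤ b → s₂.r y b → s₁.r y b := by
        intro b y hyb hy2
        rcases pointwise_comparable h₁ h₂ b with hb | hb
        · -- transfer the inclusion from b back to a, contradicting the witness
          exfalso
          obtain ⟨f⟩ := hX a b
          have hx1' : s₁.r (f ⟨x, hxa⟩ : X) b := (transfer_rel h₁ f hxa).mp hx1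
          have hx2' : s₂.r (f ⟨x, hxa⟩ : X) b := hb _ (f ⟨x, hxa⟩).2 hx1'
          exact hx2 ((transfer_rel h₂ f hxa).mpr hx2')
        · exact hb y hyb hy2
      intro x y hxy
      rcases le_total x y with h | h
      · exact key y x h hxy
      · exact s₁.iseqv.symm (key x y h (s₂.iseqv.symm hxy))
  · -- distinct invariant partitions share no class
    intro hne ⟨a, hset⟩
    apply hne
    ext x y
    rcases le_total x y with h | h
    · obtain ⟨f⟩ := hX y a
      have e : s₁.r (f ⟨x, h⟩ : X) a ↔ s₂.r (f ⟨x, h⟩ : X) a := by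
        constructor
        · intro hr; have : (f ⟨x, h⟩ : X) ∈ {z : X | s₁.r z a} := hr
          rwa [hset] at this
        · intro hr; have : (f ⟨x, h⟩ : X) ∈ {z : X | s₂.r z a} := hr
          rwa [← hset] at this
      rw [transfer_rel h₁ f h, transfer_rel h₂ f h]
      exact e
    · obtain ⟨f⟩ := hX x a
      have e : s₁.r (f ⟨y, h⟩ : X) a ↔ s₂.r (f ⟨y, h⟩ : X) a := by
        constructor
        · intro hr; have : (f ⟨y, h⟩ : X) ∈ {z : X | s₁.r z a} := hr
          rwa [hset] at this
        · intro hr; have : (f ⟨y, h⟩ : X) ∈ {z : X | s₂.r z a} := hr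
          rwa [← hset] at this
      constructor
      · intro hr
        exact s₂.iseqv.symm ((transfer_rel h₂ f h).mpr
          (e.mp ((transfer_rel h₁ f h).mp (s₁.iseqv.symm hr))))
      · intro hr
        exact s₁.iseqv.symm ((transfer_rel h₁ f h).mpr
          (e.mpr ((transfer_rel h₂ f h).mp (s₂.iseqv.symm hr))))
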